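/- arXiv:2105.12589 — 2 statements merged into one kernel-verified Lean document; each statement's English description precedes it below -/
import Mathlib

section
/- If A and B are positive semidefinite Hermitian matrices, then every eigenvalue of AB satisfies λ_i(AB) ≤ λ_max(A) · λ_i(B), where eigenvalues are ordered decreasingly. -/
open scoped Matrix ComplexOrder

/-- The eigenvalues of a Hermitian matrix, listed in decreasing order. -/
noncomputable def eigsDesc {n : ℕ} {M : Matrix (Fin n) (Fin n) ℂ} (hM : M.IsHermitian) :
    Fin n → ℝ :=
  fun i => hM.eigenvalues (Tuple.sort hM.eigenvalues i.rev)

section Aux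

open Polynomial Matrix
open scoped InnerProductSpace ComplexConjugate

variable {n : ℕ}

lemma my_charpoly_mul_comm (M N : Matrix (Fin n) (Fin n) ℂ) :
    (M * N).charpoly = (N * M).charpoly := by
  classical
  set R := Polynomial ℂ
  set M' : Matrix (Fin n) (Fin n) R := M.map C with hM'
  set N' : Matrix (Fin n) (Fin n) R := N.map C with hN'
  have hscal : Matrix.scalar (Fin n) (X : R) = (X : R) • (1 : Matrix (Fin n) (Fin n) R) := by
    rw [Matrix.scalar_apply, Matrix.smul_one_eq_diagonal]
  have hcm : ∀ K L : Matrix (Fin n) (Fin n) ℂ,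
      charmatrix (K * L) = (X : R) • 1 - (K.map C) * (L.map C) := by
    intro K L
    rw [charmatrix, hscal, RingHom.mapMatrix_apply, Matrix.map_mul]
  set P : Matrix (Fin n ⊕ Fin n) (Fin n ⊕ Fin n) R :=
    Matrix.fromBlocks ((X : R) • 1) M' N' 1 with hP
  set Q : Matrix (Fin n ⊕ Fin n) (Fin n ⊕ Fin n) R :=
    Matrix.fromBlocks 1 0 (-N') ((X : R) • 1) with hQ
  have hPQ : P * Q = Matrix.fromBlocks (charmatrix (M * N)) ((X : R) • M') 0 ((X : R) • 1) := by
    rw [hP, hQ, Matrix.fromBlocks_multiply, hcm]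
    have e1 : (X : R) • (1:Matrix (Fin n) (Fin n) R) * 1 + M' * -N'
        = (X:R) • 1 - M.map C * N.map C := by
      simp [sub_eq_add_neg]; rfl
    have e2 : (X : R) • (1:Matrix (Fin n) (Fin n) R) * 0 + M' * ((X:R) • 1) = (X:R) • M' := by
      simp [Matrix.mul_smul]
    have e3 : N' * 1 + 1 * -N' = (0 : Matrix (Fin n) (Fin n) R) := by simp; exact add_neg_cancel N'
    have e4 : N' * 0 + 1 * ((X:R) • 1) = (X : R) • (1:Matrix (Fin n) (Fin n) R) := by simp
    rw [e1, e2, e3, e4]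
  have hQP : Q * P = Matrix.fromBlocks ((X : R) • 1) M' 0 (charmatrix (N * M)) := by
    rw [hP, hQ, Matrix.fromBlocks_multiply, hcm]
    have e1 : 1 * ((X : R) • (1:Matrix (Fin n) (Fin n) R)) + 0 * N' = (X:R) • 1 := by simp
    have e2 : 1 * M' + 0 * (1:Matrix (Fin n) (Fin n) R) = M' := by simp
    have e3 : -N' * ((X:R) • 1) + ((X:R) • 1) * N' = (0 : Matrix (Fin n) (Fin n) R) := by
      simp [Matrix.mul_smul, Matrix.smul_mul]
      exact (congrArg (· + (X:R) • N') (smul_neg (X:R) N')).trans (neg_add_cancel _)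
    have e4 : -N' * M' + (X:R) • (1:Matrix (Fin n) (Fin n) R) * 1
        = (X:R) • 1 - N.map C * M.map C := by
      simp [sub_eq_add_neg, add_comm]; rfl
    rw [e1, e2, e3, e4]
  have h1 : (P * Q).det = (Q * P).det := by
    rw [Matrix.det_mul, Matrix.det_mul, mul_comm]
  rw [hPQ, hQP, Matrix.det_fromBlocks_zero₂₁, Matrix.det_fromBlocks_zero₂₁] at h1
  have hdet : ((X : R) • (1 : Matrix (Fin n) (Fin n) R)).det = X ^ n := by
    simp [Matrix.det_smul]
  rw [hdet] at h1
  have hX : (X : R) ^ n ≠ 0 := pow_ne_zero _ X_ne_zero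
  have h2 : (X : R) ^ n * (M * N).charmatrix.det = (X : R) ^ n * (N * M).charmatrix.det := by
    linear_combination h1
  have h3 := mul_left_cancel₀ hX h2
  rw [Matrix.charpoly, Matrix.charpoly]
  exact h3

lemma my_charpoly_diagonal (d : Fin n → ℂ) :
    (Matrix.diagonal d).charpoly = ∏ i : Fin n, (X - C (d i)) := by
  classical
  have h : charmatrix (Matrix.diagonal d) = Matrix.diagonal (fun i => (X : ℂ[X]) - C (d i)) := by
    ext i j
    by_cases hij : i = j
    · subst hij; simp [charmatrix_apply_eq]
    · simp [charmatrix_apply_ne _ _ _ hij, Matrix.diagonal_apply_ne, hij]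
  rw [Matrix.charpoly, h, Matrix.det_diagonal]

/-- The permutation underlying eigsDesc. -/
noncomputable def eigPerm {n : ℕ} {M : Matrix (Fin n) (Fin n) ℂ} (hM : M.IsHermitian) :
    Equiv.Perm (Fin n) :=
  (Fin.revPerm).trans (Tuple.sort hM.eigenvalues)

lemma eigsDesc_eq {M : Matrix (Fin n) (Fin n) ℂ} (hM : M.IsHermitian) (i : Fin n) :
    eigsDesc hM i = hM.eigenvalues (eigPerm hM i) := rfl

lemma eigsDesc_antitone {M : Matrix (Fin n) (Fin n) ℂ} (hM : M.IsHermitian) :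
    Antitone (eigsDesc hM) := by
  intro a b hab
  exact Tuple.monotone_sort hM.eigenvalues (Fin.rev_le_rev.mpr hab)

lemma my_charpoly_isHermitian {M : Matrix (Fin n) (Fin n) ℂ} (hM : M.IsHermitian) :
    M.charpoly = ∏ i : Fin n, (X - C ((eigsDesc hM i : ℂ))) := by
  classical
  have h0 : M.charpoly = ∏ i : Fin n, (X - C ((hM.eigenvalues i : ℂ))) := by
    have hU := hM.spectral_theorem
    set U : Matrix (Fin n) (Fin n) ℂ := (hM.eigenvectorUnitary : Matrix (Fin n) (Fin n) ℂ)
    set D : Matrix (Fin n) (Fin n) ℂ := Matrix.diagonal (RCLike.ofReal ∘ hM.eigenvalues)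
    have h1 : M.charpoly = ((U * D) * star U).charpoly := by rw [hU, Unitary.conjStarAlgAut_apply]
    rw [h1, my_charpoly_mul_comm, ← Matrix.mul_assoc]
    have h2 : star U * U = 1 := (Matrix.mem_unitaryGroup_iff').mp hM.eigenvectorUnitary.2
    rw [h2, Matrix.one_mul, my_charpoly_diagonal]
    rfl
  rw [h0]
  exact (Fintype.prod_equiv (eigPerm hM) _ _ (fun i => rfl)).symm

lemma antitone_eq_of_prod_eq {μ ν : Fin n → ℝ} (hμ : Antitone μ) (hν : Antitone ν)
    (h : ∏ i : Fin n, (X - C ((μ i : ℂ))) = ∏ i : Fin n, (X - C ((ν i : ℂ)))) : μ = ν := by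
  classical
  have key : ∀ f : Fin n → ℝ, (∏ i : Fin n, (X - C ((f i : ℂ)))).roots
      = (Finset.univ.val.map fun i => ((f i : ℂ))) := by
    intro f
    have : (∏ i : Fin n, (X - C ((f i : ℂ))))
        = ((Finset.univ.val.map fun i => ((f i : ℂ))).map fun a => X - C a).prod := by
      rw [Multiset.map_map]
      rfl
    rw [this, Polynomial.roots_multiset_prod_X_sub_C]
  have h2 : (Finset.univ.val.map fun i => ((μ i : ℂ)))
      = Finset.univ.val.map fun i => ((ν i : ℂ)) := by
    rw [← key, ← key, h]
  have h3 : (Finset.univ.val.map μ).map (Complex.ofReal)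
      = (Finset.univ.val.map ν).map Complex.ofReal := by
    rw [Multiset.map_map, Multiset.map_map]; exact h2
  have h4 : Finset.univ.val.map μ = Finset.univ.val.map ν :=
    Multiset.map_injective Complex.ofReal_injective h3
  rw [Fin.univ_val_map, Fin.univ_val_map] at h4
  have hperm : (List.ofFn μ).Perm (List.ofFn ν) := Multiset.coe_eq_coe.mp h4
  have hs1 : (List.ofFn μ).Pairwise (· ≥ ·) := List.pairwise_ofFn.mpr (fun i j hij => hμ hij.le)
  have hs2 : (List.ofFn ν).Pairwise (· ≥ ·) := List.pairwise_ofFn.mpr (fun i j hij => hν hij.le)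
  exact List.ofFn_inj.mp (List.Perm.eq_of_pairwise' hs1 hs2 hperm)

lemma herm_quad {M : Matrix (Fin n) (Fin n) ℂ} (hM : M.IsHermitian) (x : EuclideanSpace ℂ (Fin n)) :
    ⟪x, Matrix.toEuclideanLin M x⟫_ℂ
      = ((∑ j, hM.eigenvalues j * ‖hM.eigenvectorBasis.repr x j‖ ^ 2 : ℝ) : ℂ) := by
  have hT : ∀ j, Matrix.toEuclideanLin M (hM.eigenvectorBasis j)
      = (hM.eigenvalues j : ℂ) • hM.eigenvectorBasis j := by
    intro j
    have h1 := hM.mulVec_eigenvectorBasis j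
    rw [Matrix.toEuclideanLin_apply]
    apply (WithLp.equiv 2 (Fin n → ℂ)).injective
    change M *ᵥ WithLp.ofLp (hM.eigenvectorBasis j) = WithLp.ofLp ((hM.eigenvalues j : ℂ) • hM.eigenvectorBasis j)
    rw [h1, RCLike.real_smul_eq_coe_smul (K := ℂ)]
    rfl
  have hx : Matrix.toEuclideanLin M x
      = ∑ j, ((hM.eigenvalues j : ℂ) * hM.eigenvectorBasis.repr x j) • hM.eigenvectorBasis j := by
    conv_lhs => rw [← hM.eigenvectorBasis.sum_repr x]
    rw [map_sum]
    refine Finset.sum_congr rfl fun j _ => ?_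
    rw [LinearMap.map_smul, hT, smul_smul, mul_comm]
  rw [hx, inner_sum]
  have hxb : ∀ j, ⟪x, hM.eigenvectorBasis j⟫_ℂ = conj (hM.eigenvectorBasis.repr x j) := by
    intro j
    rw [← inner_conj_symm, OrthonormalBasis.repr_apply_apply]
  push_cast
  refine Finset.sum_congr rfl fun j _ => ?_
  rw [inner_smul_right, hxb, mul_assoc, Complex.mul_conj]
  norm_cast
  rw [Complex.normSq_eq_norm_sq]

lemma sum_sq_repr (b : OrthonormalBasis (Fin n) ℂ (EuclideanSpace ℂ (Fin n)))
    (x : EuclideanSpace ℂ (Fin n)) : ∑ j, ‖b.repr x j‖ ^ 2 = ‖x‖ ^ 2 := by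
  have h1 : ‖b.repr x‖ = ‖x‖ := b.repr.norm_map x
  rw [← h1, EuclideanSpace.norm_eq]
  rw [Real.sq_sqrt (Finset.sum_nonneg fun j _ => sq_nonneg _)]

lemma eigsDesc_le_of_quad {C B : Matrix (Fin n) (Fin n) ℂ} (hC : C.IsHermitian)
    (hB : B.IsHermitian) {a : ℝ} (ha : 0 ≤ a)
    (h : ∀ x : EuclideanSpace ℂ (Fin n),
      (⟪x, Matrix.toEuclideanLin C x⟫_ℂ).re ≤ a * (⟪x, Matrix.toEuclideanLin B x⟫_ℂ).re)
    (i : Fin n) : eigsDesc hC i ≤ a * eigsDesc hB i := by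
  classical
  set E := EuclideanSpace ℂ (Fin n)
  set f : Fin n → E := fun k => hC.eigenvectorBasis (eigPerm hC k) with hf
  set g : Fin n → E := fun k => hB.eigenvectorBasis (eigPerm hB k) with hg
  have hin : (i.val + 1) ≤ n := i.isLt
  set b : Fin (i.val + 1) → E := fun k => f (Fin.castLE hin k) with hbdef
  have hb_on : Orthonormal ℂ b := by
    apply hC.eigenvectorBasis.orthonormal.comp
    exact ((eigPerm hC).injective.comp (Fin.castLE_injective hin))
  set S : Submodule ℂ E := Submodule.span ℂ (Set.range b) with hS
  have hfinS : Module.finrank ℂ S = i.val + 1 := by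
    rw [finrank_span_eq_card hb_on.linearIndependent, Fintype.card_fin]
  set Φ : E →ₗ[ℂ] (Fin i.val → ℂ) :=
    LinearMap.pi (fun j => ((innerSL ℂ (g (Fin.castLE i.isLt.le j))) : E →L[ℂ] ℂ).toLinearMap)
    with hΦ
  set ψ : S →ₗ[ℂ] (Fin i.val → ℂ) := Φ.comp S.subtype with hψ
  have hrange : Module.finrank ℂ (LinearMap.range ψ) ≤ i.val := by
    calc Module.finrank ℂ (LinearMap.range ψ) ≤ Module.finrank ℂ (Fin i.val → ℂ) :=
          Submodule.finrank_le _
      _ = i.val := by simp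
  have hker : LinearMap.ker ψ ≠ ⊥ := by
    intro hbot
    have := LinearMap.finrank_range_add_finrank_ker ψ
    rw [hfinS, hbot] at this
    simp only [finrank_bot, add_zero] at this
    omega
  obtain ⟨y, hy_mem, hy_ne⟩ := Submodule.exists_mem_ne_zero_of_ne_bot hker
  set x : E := (y : E) with hxdef
  have hx_ne : x ≠ 0 := fun h0 => hy_ne (ZeroMemClass.coe_eq_zero.mp h0)
  have hxS : x ∈ S := y.2
  have hΦx : ∀ j : Fin i.val, ⟪g (Fin.castLE i.isLt.le j), x⟫_ℂ = 0 := by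
    intro j
    have h2 : Φ x = 0 := hy_mem
    exact congrFun h2 j
  set t : Fin n → ℝ := fun k => ‖hC.eigenvectorBasis.repr x (eigPerm hC k)‖ ^ 2 with ht
  set s : Fin n → ℝ := fun k => ‖hB.eigenvectorBasis.repr x (eigPerm hB k)‖ ^ 2 with hs
  have hF1 : ∀ k : Fin n, i < k → hC.eigenvectorBasis.repr x (eigPerm hC k) = 0 := by
    intro k hik
    rw [OrthonormalBasis.repr_apply_apply]
    have hsub : S ≤ LinearMap.ker ((innerSL ℂ (hC.eigenvectorBasis (eigPerm hC k))) :
        E →L[ℂ] ℂ).toLinearMap := by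
      rw [hS, Submodule.span_le]
      rintro - ⟨j, rfl⟩
      simp only [SetLike.mem_coe, LinearMap.mem_ker, ContinuousLinearMap.coe_coe]
      apply hC.eigenvectorBasis.orthonormal.2
      intro he
      have hkj : k = Fin.castLE hin j := (eigPerm hC).injective he
      have hle : (Fin.castLE hin j : Fin n) ≤ i := by
        have := j.isLt
        simp only [Fin.le_def, Fin.coe_castLE]
        omega
      rw [← hkj] at hle
      exact absurd hle (not_le.mpr hik)
    exact hsub hxS
  have hF2 : ∀ k : Fin n, k < i → hB.eigenvectorBasis.repr x (eigPerm hB k) = 0 := by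
    intro k hki
    rw [OrthonormalBasis.repr_apply_apply]
    have hk : k = Fin.castLE i.isLt.le ⟨k.val, hki⟩ := by
      apply Fin.ext; rfl
    rw [hk]
    exact hΦx ⟨k.val, hki⟩
  have hQC : (⟪x, Matrix.toEuclideanLin C x⟫_ℂ).re = ∑ k, eigsDesc hC k * t k := by
    rw [herm_quad hC x, Complex.ofReal_re]
    exact (Equiv.sum_comp (eigPerm hC) (fun j => hC.eigenvalues j *
      ‖hC.eigenvectorBasis.repr x j‖ ^ 2)).symm
  have hQB : (⟪x, Matrix.toEuclideanLin B x⟫_ℂ).re = ∑ k, eigsDesc hB k * s k := by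
    rw [herm_quad hB x, Complex.ofReal_re]
    exact (Equiv.sum_comp (eigPerm hB) (fun j => hB.eigenvalues j *
      ‖hB.eigenvectorBasis.repr x j‖ ^ 2)).symm
  have hsumt : ∑ k, t k = ‖x‖ ^ 2 := by
    rw [← sum_sq_repr hC.eigenvectorBasis x]
    exact Equiv.sum_comp (eigPerm hC) (fun j => ‖hC.eigenvectorBasis.repr x j‖ ^ 2)
  have hsums : ∑ k, s k = ‖x‖ ^ 2 := by
    rw [← sum_sq_repr hB.eigenvectorBasis x]
    exact Equiv.sum_comp (eigPerm hB) (fun j => ‖hB.eigenvectorBasis.repr x j‖ ^ 2)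
  have hlb : eigsDesc hC i * ‖x‖ ^ 2 ≤ (⟪x, Matrix.toEuclideanLin C x⟫_ℂ).re := by
    rw [hQC, ← hsumt, Finset.mul_sum]
    refine Finset.sum_le_sum fun k _ => ?_
    rcases le_or_gt k i with hk | hk
    · exact mul_le_mul_of_nonneg_right (eigsDesc_antitone hC hk) (sq_nonneg _)
    · have : t k = 0 := by rw [ht]; simp [hF1 k hk]
      rw [this, mul_zero, mul_zero]
  have hub : (⟪x, Matrix.toEuclideanLin B x⟫_ℂ).re ≤ eigsDesc hB i * ‖x‖ ^ 2 := by
    rw [hQB, ← hsums, Finset.mul_sum]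
    refine Finset.sum_le_sum fun k _ => ?_
    rcases le_or_gt i k with hk | hk
    · exact mul_le_mul_of_nonneg_right (eigsDesc_antitone hB hk) (sq_nonneg _)
    · have : s k = 0 := by rw [hs]; simp [hF2 k hk]
      rw [this, mul_zero, mul_zero]
  have hchain : eigsDesc hC i * ‖x‖ ^ 2 ≤ (a * eigsDesc hB i) * ‖x‖ ^ 2 := by
    calc eigsDesc hC i * ‖x‖ ^ 2 ≤ (⟪x, Matrix.toEuclideanLin C x⟫_ℂ).re := hlb
      _ ≤ a * (⟪x, Matrix.toEuclideanLin B x⟫_ℂ).re := h x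
      _ ≤ a * (eigsDesc hB i * ‖x‖ ^ 2) := mul_le_mul_of_nonneg_left hub ha
      _ = (a * eigsDesc hB i) * ‖x‖ ^ 2 := by ring
  have hxpos : (0:ℝ) < ‖x‖ ^ 2 := pow_pos (norm_pos_iff.mpr hx_ne) 2
  exact le_of_mul_le_mul_right hchain hxpos

end Aux

open Polynomial Matrix
open scoped InnerProductSpace MatrixOrder

/-- If `A` and `B` are positive semidefinite Hermitian matrices and `μ` is the decreasing
enumeration of the eigenvalues of `A * B` (i.e. `μ` is antitone and the characteristic
polynomial of `A * B` is `∏ i, (X - μ i)`), then `μ i ≤ λ_max(A) * λ_i(B)` for every `i`. -/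
theorem eig_mul_psd_le {n : ℕ} {A B : Matrix (Fin n) (Fin n) ℂ}
    (hA : A.PosSemidef) (hB : B.PosSemidef) (μ : Fin n → ℝ) (hμ : Antitone μ)
    (hchar : (A * B).charpoly = ∏ i : Fin n, (Polynomial.X - Polynomial.C ((μ i : ℂ))))
    (i : Fin n) :
    μ i ≤ eigsDesc hA.isHermitian ⟨0, i.pos⟩ * eigsDesc hB.isHermitian i := by
  classical
  set Sq : Matrix (Fin n) (Fin n) ℂ := CFC.sqrt B with hSqdef
  have hSqps : Sq.PosSemidef := (CFC.sqrt_nonneg B).posSemidef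
  have hSqH : Sqᴴ = Sq := hSqps.isHermitian
  set Cm : Matrix (Fin n) (Fin n) ℂ := Sq * A * Sq with hCmdef
  have hCps : Cm.PosSemidef := by
    have := hA.mul_mul_conjTranspose_same Sq
    rwa [hSqH] at this
  have hCH : Cm.IsHermitian := hCps.isHermitian
  have hcp : (A * B).charpoly = Cm.charpoly := by
    have h1 : A * B = (A * Sq) * Sq := by
      rw [Matrix.mul_assoc, CFC.sqrt_mul_sqrt_self B hB.nonneg]
    rw [h1, my_charpoly_mul_comm, ← Matrix.mul_assoc]
  have hμC : μ = eigsDesc hCH := by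
    apply antitone_eq_of_prod_eq hμ (eigsDesc_antitone hCH)
    rw [← hchar, hcp, my_charpoly_isHermitian hCH]
  set a : ℝ := eigsDesc hA.isHermitian ⟨0, i.pos⟩ with hadef
  have ha : 0 ≤ a := hA.eigenvalues_nonneg _
  have hmax : ∀ j, hA.isHermitian.eigenvalues j ≤ a := by
    intro j
    have h1 : hA.isHermitian.eigenvalues j
        = eigsDesc hA.isHermitian ((eigPerm hA.isHermitian).symm j) := by
      rw [eigsDesc_eq, Equiv.apply_symm_apply]
    rw [h1]
    apply eigsDesc_antitone hA.isHermitian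
    simp [Fin.le_def]
  have hq : ∀ x : EuclideanSpace ℂ (Fin n),
      (⟪x, Matrix.toEuclideanLin Cm x⟫_ℂ).re ≤ a * (⟪x, Matrix.toEuclideanLin B x⟫_ℂ).re := by
    intro x
    set v : Fin n → ℂ := WithLp.equiv 2 (Fin n → ℂ) x with hv
    set w : Fin n → ℂ := Sq *ᵥ v with hw
    set wE : EuclideanSpace ℂ (Fin n) := (WithLp.equiv 2 (Fin n → ℂ)).symm w with hwE
    have hdot : ∀ (M : Matrix (Fin n) (Fin n) ℂ) (z : EuclideanSpace ℂ (Fin n)),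
        ⟪z, Matrix.toEuclideanLin M z⟫_ℂ
          = dotProduct (star (WithLp.equiv 2 (Fin n → ℂ) z))
            (M *ᵥ (WithLp.equiv 2 (Fin n → ℂ) z)) := by
      intro M z
      rw [Matrix.toEuclideanLin_apply]
      conv_lhs => rw [← (WithLp.equiv 2 (Fin n → ℂ)).symm_apply_apply z]
      exact (EuclideanSpace.inner_eq_star_dotProduct _ _).trans (dotProduct_comm _ _)
    have hstar : star v ᵥ* Sq = star w := by
      rw [hw, star_mulVec, hSqH]
    have hCmv : ⟪x, Matrix.toEuclideanLin Cm x⟫_ℂ = ⟪wE, Matrix.toEuclideanLin A wE⟫_ℂ := by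
      rw [hdot, hdot]
      have hw' : WithLp.equiv 2 (Fin n → ℂ) wE = w := by
        rw [hwE, Equiv.apply_symm_apply]
      rw [hw', hCmdef]
      rw [← Matrix.mulVec_mulVec, ← Matrix.mulVec_mulVec, dotProduct_mulVec, hstar]
    have hBv : ⟪x, Matrix.toEuclideanLin B x⟫_ℂ = ((‖wE‖ ^ 2 : ℝ) : ℂ) := by
      rw [hdot]
      have hB2 : B = Sq * Sq := (CFC.sqrt_mul_sqrt_self B hB.nonneg).symm
      rw [hB2, ← Matrix.mulVec_mulVec, dotProduct_mulVec, hstar]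
      have hw' : WithLp.equiv 2 (Fin n → ℂ) wE = w := by
        rw [hwE, Equiv.apply_symm_apply]
      have : ⟪(WithLp.equiv 2 (Fin n → ℂ)).symm w, (WithLp.equiv 2 (Fin n → ℂ)).symm w⟫_ℂ = dotProduct (star w) w := (EuclideanSpace.inner_eq_star_dotProduct _ _).trans (dotProduct_comm _ _)
      rw [← hwE] at this
      rw [← this, inner_self_eq_norm_sq_to_K]
      norm_cast
    rw [hCmv, hBv, Complex.ofReal_re, herm_quad hA.isHermitian wE, Complex.ofReal_re,
      ← sum_sq_repr hA.isHermitian.eigenvectorBasis wE, Finset.mul_sum]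
    refine Finset.sum_le_sum fun j _ => ?_
    exact mul_le_mul_of_nonneg_right (hmax j) (sq_nonneg _)
  have hfin := eigsDesc_le_of_quad hCH hB.isHermitian ha hq i
  rw [hμC]
  exact hfin
end

section
/- Let C be an n×n real symmetric matrix with diagonal d and off-diagonal part C′. Suppose estimators g_j of c_{jj} satisfy E[(g_j − c_{jj})²] ≤ 2δ₁²c_{jj}², and estimators h_{jk} (j<k) of c_{jk} satisfy E[(h_{jk} − c_{jk})²] ≤ 2(δ₂ c_{jk} + ½(δ₁+δ₂)(c_{jj}+c_{kk}))². Form the symmetric matrix Ĉ′ with zero diagonal and entries h_{jk}. Then E[‖Ĉ′ − C′‖_F²] ≤ 3(n−1)(δ₁+δ₂)²‖d‖₂² + 6δ₂²‖C′‖_F². -/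
open Finset MeasureTheory

lemma offdiag_sum_helper {n : ℕ} (f : Fin n → Fin n → ℝ) :
    ∑ j, ∑ k, (if j = k then (0:ℝ) else f j k) = (∑ j, ∑ k, f j k) - ∑ j, f j j := by
  rw [← Finset.sum_sub_distrib]
  refine Finset.sum_congr rfl fun j _ => ?_
  have : ∀ k, (if j = k then (0:ℝ) else f j k) = f j k - (if j = k then f j k else 0) := by
    intro k; split_ifs with h
    · subst h; ring
    · ring
  rw [Finset.sum_congr rfl fun k _ => this k, Finset.sum_sub_distrib, Finset.sum_ite_eq]
  simp


/-- Error bound for the naive estimator of the off-diagonal part of a symmetric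
correlation matrix `C`.  If the single-element estimators `g_j`, `h_{jk}` satisfy
`E[(g_j − c_{jj})²] ≤ 2δ₁² c_{jj}²` and, for `j < k`,
`E[(h_{jk} − c_{jk})²] ≤ 2(δ₂ c_{jk} + ½(δ₁+δ₂)(c_{jj}+c_{kk}))²`, then the
symmetrized estimator `Ĉ′` with zero diagonal satisfies
`E[‖Ĉ′ − C′‖_F²] ≤ 3(n−1)(δ₁+δ₂)²‖diag C‖₂² + 6δ₂²‖C′‖_F²`. -/
theorem naive_offdiag_error_bound {n : ℕ} {Ω : Type*} [MeasurableSpace Ω]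
    (μ : Measure Ω) [IsProbabilityMeasure μ]
    (C : Matrix (Fin n) (Fin n) ℝ) (hC : C.IsSymm) (hdiag : ∀ j, 0 ≤ C j j)
    (δ₁ δ₂ : ℝ) (g : Fin n → Ω → ℝ) (h : Fin n → Fin n → Ω → ℝ)
    (hgint : ∀ j, Integrable (fun ω => (g j ω - C j j) ^ 2) μ)
    (hhint : ∀ j k, j < k → Integrable (fun ω => (h j k ω - C j k) ^ 2) μ)
    (hg : ∀ j, ∫ ω, (g j ω - C j j) ^ 2 ∂μ ≤ 2 * δ₁ ^ 2 * (C j j) ^ 2)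
    (hh : ∀ j k, j < k → ∫ ω, (h j k ω - C j k) ^ 2 ∂μ ≤
      2 * (δ₂ * C j k + (1 / 2) * (δ₁ + δ₂) * (C j j + C k k)) ^ 2) :
    ∫ ω, (∑ j, ∑ k,
        ((if j = k then 0 else if j < k then h j k ω else h k j ω) -
          (if j = k then 0 else C j k)) ^ 2) ∂μ ≤
      3 * ((n : ℝ) - 1) * (δ₁ + δ₂) ^ 2 * (∑ j, (C j j) ^ 2) +
        6 * δ₂ ^ 2 * ∑ j, ∑ k, (if j = k then (0 : ℝ) else C j k) ^ 2 := by
  have hsym : ∀ j k, C j k = C k j := fun j k => hC.apply k j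
  set F : Fin n → Fin n → Ω → ℝ := fun j k ω =>
    ((if j = k then 0 else if j < k then h j k ω else h k j ω) -
      (if j = k then 0 else C j k)) ^ 2 with hF
  have hFint : ∀ j k, Integrable (F j k) μ := by
    intro j k
    rcases lt_trichotomy j k with hlt | heq | hgt
    · simpa [hF, hlt.ne, hlt] using hhint j k hlt
    · simpa [hF, heq] using integrable_const (0:ℝ)
    · simpa [hF, hgt.ne', not_lt.2 hgt.le, hsym j k] using hhint k j hgt
  have hbound : ∀ j k, ∫ ω, F j k ω ∂μ ≤
      (if j = k then (0:ℝ) else 6*δ₂^2*(C j k)^2 + (3/2)*(δ₁+δ₂)^2*(C j j)^2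
        + (3/2)*(δ₁+δ₂)^2*(C k k)^2) := by
    intro j k
    rcases lt_trichotomy j k with hlt | heq | hgt
    · have h1 := hh j k hlt
      have h2 : 2 * (δ₂ * C j k + (1/2) * (δ₁+δ₂) * (C j j + C k k)) ^ 2 ≤
          6*δ₂^2*(C j k)^2 + (3/2)*(δ₁+δ₂)^2*(C j j)^2 + (3/2)*(δ₁+δ₂)^2*(C k k)^2 := by
        nlinarith [sq_nonneg (δ₂ * C j k - (1/2)*(δ₁+δ₂)*(C j j)),
          sq_nonneg (δ₂ * C j k - (1/2)*(δ₁+δ₂)*(C k k)),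
          sq_nonneg ((1/2)*(δ₁+δ₂)*(C j j) - (1/2)*(δ₁+δ₂)*(C k k))]
      have : ∫ ω, F j k ω ∂μ = ∫ ω, (h j k ω - C j k) ^ 2 ∂μ := by
        simp [hF, hlt.ne, hlt]
      rw [this, if_neg hlt.ne]
      exact h1.trans h2
    · simp [hF, heq]
    · have h1 := hh k j hgt
      have h2 : 2 * (δ₂ * C k j + (1/2) * (δ₁+δ₂) * (C k k + C j j)) ^ 2 ≤
          6*δ₂^2*(C j k)^2 + (3/2)*(δ₁+δ₂)^2*(C j j)^2 + (3/2)*(δ₁+δ₂)^2*(C k k)^2 := by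
        rw [← hsym j k]
        nlinarith [sq_nonneg (δ₂ * C j k - (1/2)*(δ₁+δ₂)*(C j j)),
          sq_nonneg (δ₂ * C j k - (1/2)*(δ₁+δ₂)*(C k k)),
          sq_nonneg ((1/2)*(δ₁+δ₂)*(C j j) - (1/2)*(δ₁+δ₂)*(C k k))]
      have : ∫ ω, F j k ω ∂μ = ∫ ω, (h k j ω - C k j) ^ 2 ∂μ := by
        simp [hF, hgt.ne', not_lt.2 hgt.le, hsym j k]
      rw [this, if_neg hgt.ne']
      exact h1.trans h2
  have hswap : (∫ ω, (∑ j, ∑ k, F j k ω) ∂μ) = ∑ j, ∑ k, ∫ ω, F j k ω ∂μ := by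
    rw [integral_finset_sum _ fun j _ => integrable_finset_sum _ fun k _ => hFint j k]
    exact Finset.sum_congr rfl fun j _ =>
      integral_finset_sum _ fun k _ => hFint j k
  calc ∫ ω, (∑ j, ∑ k, F j k ω) ∂μ
      = ∑ j, ∑ k, ∫ ω, F j k ω ∂μ := hswap
    _ ≤ ∑ j, ∑ k, (if j = k then (0:ℝ) else 6*δ₂^2*(C j k)^2
          + (3/2)*(δ₁+δ₂)^2*(C j j)^2 + (3/2)*(δ₁+δ₂)^2*(C k k)^2) :=
        Finset.sum_le_sum fun j _ => Finset.sum_le_sum fun k _ => hbound j k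
    _ = 3 * ((n : ℝ) - 1) * (δ₁ + δ₂) ^ 2 * (∑ j, (C j j) ^ 2) +
        6 * δ₂ ^ 2 * ∑ j, ∑ k, (if j = k then (0 : ℝ) else C j k) ^ 2 := by
        have htgt : ∀ j k : Fin n, ((if j = k then (0:ℝ) else C j k))^2
            = (if j = k then (0:ℝ) else (C j k)^2) := by
          intro j k; split_ifs <;> simp
        simp only [htgt]
        rw [offdiag_sum_helper, offdiag_sum_helper]
        simp only [Finset.sum_add_distrib, Finset.sum_const, Finset.card_univ,
          Fintype.card_fin, nsmul_eq_mul, ← Finset.mul_sum]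
        ring
end
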